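/- For the average-cost function 𝒞(X̄) = ( X̄²/2 + (1/p − 1/2)X̄ + 1/p² − 1/p + c ) / ( X̄ + (1−p)/p ), the equation 𝒞(x) = 𝒞(x+1) (viewing x as a real variable with x ≥ 1) holds if and only if c = x²/2 − x/2 + x/p. -/

import Mathlib

/-- The indifference equation `𝒞(x) = 𝒞(x+1)` holds iff `c` equals the Whittle
index `x²/2 − x/2 + x/p`. -/
theorem stmt_3 (p : ℝ) (hp : 0 < p) (hp1 : p ≤ 1) (c : ℝ) (x : ℝ) (hx : 1 ≤ x) :
    (x ^ 2 / 2 + (1 / p - 1 / 2) * x + 1 / p ^ 2 - 1 / p + c) / (x + (1 - p) / p) =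
      ((x + 1) ^ 2 / 2 + (1 / p - 1 / 2) * (x + 1) + 1 / p ^ 2 - 1 / p + c) /
        ((x + 1) + (1 - p) / p)
    ↔ c = x ^ 2 / 2 - x / 2 + x / p := by
  have hq : 0 ≤ (1 - p) / p := div_nonneg (by linarith) hp.le
  have h1 : x + (1 - p) / p > 0 := by linarith
  have h2 : (x + 1) + (1 - p) / p > 0 := by linarith
  rw [div_eq_div_iff (ne_of_gt h1) (ne_of_gt h2)]
  constructor
  · intro h
    have hp' := hp.ne'
    field_simp at h
    have key : c * (4 * p ^ 5) = (x ^ 2 * 2 - x * 2) * p ^ 5 + x * 4 * p ^ 4 := by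
      linear_combination (2 * p ^ 2) * h
    have hp5 : (4 : ℝ) * p ^ 5 ≠ 0 := by positivity
    field_simp
    nlinarith [key, pow_pos hp 4, pow_pos hp 5]
  · intro h
    subst h
    field_simp
    ring
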